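/- Let (X,d) be a metric space, S ⊆ X nonempty, Y a real vector space, D a convex cone in Y, H ⊂ D a D-convex set, γ > 0, and f : X → Y. For x ∈ S define S(x) = {z ∈ S : f(x) ∈ f(z) + γ d(x,z)H + D}. Then x ∈ S(x) for every x ∈ S, and if z ∈ S(x) then S(z) ⊆ S(x). -/

import Mathlib

open Pointwise

/-- The set-valued map `S(x) = {z ∈ S : f(x) ∈ f(z) + γ d(x,z) H + D}`. -/
def Ssec {X Y : Type*} [MetricSpace X] [AddCommGroup Y] [Module ℝ Y]
    (S : Set X) (D H : Set Y) (f : X → Y) (γ : ℝ) (x : X) : Set X :=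
  {z ∈ S | f x ∈ {f z} + (γ * dist x z) • H + D}

lemma mem_singleton_add_smul_add {Y : Type*} [AddCommGroup Y] [Module ℝ Y]
    (a y : Y) (c : ℝ) (H D : Set Y) :
    y ∈ {a} + c • H + D ↔ ∃ h ∈ H, ∃ d ∈ D, y = a + c • h + d := by
  constructor
  · rintro ⟨-, ⟨a', rfl, u, ⟨h, hh, rfl⟩, rfl⟩, d, hd, rfl⟩
    exact ⟨h, hh, d, hd, rfl⟩
  · rintro ⟨h, hh, d, hd, rfl⟩
    exact ⟨a + c • h, ⟨a, rfl, c • h, ⟨h, hh, rfl⟩, rfl⟩, d, hd, rfl⟩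

theorem Ssec_refl_and_trans {X Y : Type*} [MetricSpace X] [AddCommGroup Y] [Module ℝ Y]
    (S : Set X) (hS : S.Nonempty) (D H : Set Y)
    (hDadd : ∀ a ∈ D, ∀ b ∈ D, a + b ∈ D)
    (hDsmul : ∀ α : ℝ, 0 ≤ α → ∀ d ∈ D, α • d ∈ D)
    (hHne : H.Nonempty) (hHD : H ⊆ D) (hconv : Convex ℝ (H + D))
    (f : X → Y) (γ : ℝ) (hγ : 0 < γ) :
    (∀ x ∈ S, x ∈ Ssec S D H f γ x) ∧
    (∀ x ∈ S, ∀ z ∈ Ssec S D H f γ x, Ssec S D H f γ z ⊆ Ssec S D H f γ x) := by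
  obtain ⟨h₀, hh₀⟩ := hHne
  have h0D : (0 : Y) ∈ D := by simpa using hDsmul 0 le_rfl h₀ (hHD hh₀)
  constructor
  · intro x hx
    refine ⟨hx, (mem_singleton_add_smul_add _ _ _ _ _).2 ⟨h₀, hh₀, 0, h0D, ?_⟩⟩
    simp
  · rintro x hx z ⟨hzS, hz⟩ w ⟨hwS, hw⟩
    obtain ⟨h₁, hh₁, d₁, hd₁, e₁⟩ := (mem_singleton_add_smul_add _ _ _ _ _).1 hz
    obtain ⟨h₂, hh₂, d₂, hd₂, e₂⟩ := (mem_singleton_add_smul_add _ _ _ _ _).1 hw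
    refine ⟨hwS, (mem_singleton_add_smul_add _ _ _ _ _).2 ?_⟩
    set a := dist x z with ha
    set b := dist z w with hb
    set t := dist x w with htdef
    have ha0 : 0 ≤ a := dist_nonneg
    have hb0 : 0 ≤ b := dist_nonneg
    have ht0 : 0 ≤ t := dist_nonneg
    have htri : t ≤ a + b := dist_triangle x z w
    rcases eq_or_lt_of_le (by positivity : (0:ℝ) ≤ a + b) with hs | hs
    · -- degenerate case a + b = 0
      have haz : a = 0 := le_antisymm (by linarith) ha0
      have hbz : b = 0 := le_antisymm (by linarith) hb0
      have htz : t = 0 := le_antisymm (by linarith) ht0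
      refine ⟨h₁, hh₁, d₁ + d₂, hDadd _ hd₁ _ hd₂, ?_⟩
      rw [e₁, e₂, haz, hbz, htz]
      simp
      abel
    · -- main case a + b > 0
      set s : ℝ := a + b with hsdef
      have hsne : s ≠ 0 := ne_of_gt hs
      have hm1 : h₁ ∈ H + D := ⟨h₁, hh₁, 0, h0D, add_zero _⟩
      have hm2 : h₂ ∈ H + D := ⟨h₂, hh₂, 0, h0D, add_zero _⟩
      have hcomb := hconv hm1 hm2 (by positivity : (0:ℝ) ≤ a / s)
        (by positivity : (0:ℝ) ≤ b / s) (by field_simp; exact hsdef.symm)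
      obtain ⟨h, hh, d, hd, heq⟩ := hcomb
      have hkey : a • h₁ + b • h₂ = s • h + s • d := by
        have := congrArg (fun y : Y => s • y) heq
        simp only [smul_add, smul_smul] at this
        rw [mul_div_cancel₀ _ hsne, mul_div_cancel₀ _ hsne] at this
        exact this.symm
      refine ⟨h, hh, (γ * (s - t)) • h + (γ * s) • d + (d₁ + d₂),
        hDadd _ (hDadd _ (hDsmul _ (by nlinarith) _ (hHD hh)) _
          (hDsmul _ (by positivity) _ hd)) _ (hDadd _ hd₁ _ hd₂), ?_⟩
      rw [e₁, e₂]
      linear_combination (norm := module) γ • hkey
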